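/- Let κ be an irreducible, integrable hyperkernel on a probability space (S, μ), and let f, g : S → [0,1] be measurable functions with f(x) ≤ g(x) for every x, satisfying f = 1 − e^{−S_κ(f)} and g = 1 − e^{−S_κ(g)} pointwise. Then either f is identically 0, or f = g. -/

import Mathlib

open MeasureTheory ENNReal Filter Topology

/-- The nonlinear operator `S_κ` associated to a hyperkernel `κ = (κ_r)_{r ≥ 2}`;
here `κ m` plays the role of `κ_{m+2}`. -/
noncomputable def Sop {S : Type*} [MeasurableSpace S] (μ : Measure S)
    (κ : (m : ℕ) → (Fin (m + 2) → S) → ℝ≥0∞) (f : S → ℝ) (x : S) : ℝ≥0∞ :=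
  ∑' m : ℕ, ((m : ℝ≥0∞) + 2) *
    ∫⁻ y : Fin (m + 1) → S,
      κ m (Fin.cons x y) * ENNReal.ofReal (1 - ∏ i, (1 - f (y i)))
      ∂(Measure.pi fun _ => μ)

/-- The edge kernel `κ_e` of a hyperkernel. -/
noncomputable def edgeKernel {S : Type*} [MeasurableSpace S] (μ : Measure S)
    (κ : (m : ℕ) → (Fin (m + 2) → S) → ℝ≥0∞) (x y : S) : ℝ≥0∞ :=
  ∑' m : ℕ, ((m : ℝ≥0∞) + 2) * ((m : ℝ≥0∞) + 1) *
    ∫⁻ z : Fin m → S, κ m (Fin.cons x (Fin.cons y z)) ∂(Measure.pi fun _ => μ)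

/-- The linear operator `T_κ`. -/
noncomputable def Tlin {S : Type*} [MeasurableSpace S] (μ : Measure S)
    (κ : (m : ℕ) → (Fin (m + 2) → S) → ℝ≥0∞) (f : S → ℝ) (x : S) : ℝ≥0∞ :=
  ∫⁻ y, edgeKernel μ κ x y * ENNReal.ofReal (f y) ∂μ

/-- All kernels of the family are measurable. -/
def HyperkernelMeasurable {S : Type*} [MeasurableSpace S]
    (κ : (m : ℕ) → (Fin (m + 2) → S) → ℝ≥0∞) : Prop :=
  ∀ m, Measurable (κ m)

/-- Each kernel is invariant under all permutations of its arguments. -/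
def HyperkernelSymm {S : Type*} [MeasurableSpace S]
    (κ : (m : ℕ) → (Fin (m + 2) → S) → ℝ≥0∞) : Prop :=
  ∀ m (σ : Equiv.Perm (Fin (m + 2))) (v : Fin (m + 2) → S), κ m (v ∘ σ) = κ m v

/-- Integrability of the hyperkernel: `∑_{r≥2} r ∫_{S^r} κ_r < ∞`. -/
def HyperkernelIntegrable {S : Type*} [MeasurableSpace S] (μ : Measure S)
    (κ : (m : ℕ) → (Fin (m + 2) → S) → ℝ≥0∞) : Prop :=
  ∑' m : ℕ, ((m : ℝ≥0∞) + 2) *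
    ∫⁻ v : Fin (m + 2) → S, κ m v ∂(Measure.pi fun _ => μ) ≠ ⊤

/-- `expNeg a = e^{-a}` for `a ∈ [0,∞]`, with `e^{-∞} = 0`. -/
noncomputable def expNeg (a : ℝ≥0∞) : ℝ := if a = ⊤ then 0 else Real.exp (-a.toReal)

/-- The operator `Φ_κ(f) = 1 - e^{-S_κ(f)}`. -/
noncomputable def Phi {S : Type*} [MeasurableSpace S] (μ : Measure S)
    (κ : (m : ℕ) → (Fin (m + 2) → S) → ℝ≥0∞) (f : S → ℝ) (x : S) : ℝ :=
  1 - expNeg (Sop μ κ f x)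

/-- Irreducibility of the hyperkernel. -/
def HyperkernelIrreducible {S : Type*} [MeasurableSpace S] (μ : Measure S)
    (κ : (m : ℕ) → (Fin (m + 2) → S) → ℝ≥0∞) : Prop :=
  ∀ A : Set S, MeasurableSet A →
    (∀ᵐ p ∂(μ.prod μ), p ∈ A ×ˢ Aᶜ → edgeKernel μ κ p.1 p.2 = 0) →
    μ A = 0 ∨ μ Aᶜ = 0

/-- The decreasing iterates `ρ_0 = 1`, `ρ_{t+1} = Φ_κ(ρ_t)`. -/
noncomputable def rhoSeq {S : Type*} [MeasurableSpace S] (μ : Measure S)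
    (κ : (m : ℕ) → (Fin (m + 2) → S) → ℝ≥0∞) : ℕ → S → ℝ
  | 0 => fun _ => 1
  | t + 1 => Phi μ κ (rhoSeq μ κ t)

/-- The pointwise limit `ρ_κ` of the decreasing iterates `Φ_κ^t(1)`. -/
noncomputable def rhoFun {S : Type*} [MeasurableSpace S] (μ : Measure S)
    (κ : (m : ℕ) → (Fin (m + 2) → S) → ℝ≥0∞) : S → ℝ :=
  fun x => ⨅ t : ℕ, rhoSeq μ κ t x

/-- The condition `‖T_κ‖ > 1` on the `L²(μ)` operator norm of `T_κ`. -/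
def TopNormGtOne {S : Type*} [MeasurableSpace S] (μ : Measure S)
    (κ : (m : ℕ) → (Fin (m + 2) → S) → ℝ≥0∞) : Prop :=
  ∃ h : S → ℝ, Measurable h ∧ (∀ x, 0 ≤ h x) ∧
    (∫⁻ x, ENNReal.ofReal (h x) ^ 2 ∂μ) ≤ 1 ∧ 1 < ∫⁻ x, (Tlin μ κ h x) ^ 2 ∂μ


open Finset

section Helpers

variable {S : Type*} [MeasurableSpace S] (μ : Measure S) [IsProbabilityMeasure μ]

lemma measurable_finCons {n : ℕ} :
    Measurable (fun p : S × (Fin n → S) => Fin.cons p.1 p.2 : S × (Fin n → S) → (Fin (n+1) → S)) := by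
  rw [measurable_pi_iff]
  intro i
  refine Fin.cases ?_ ?_ i
  · simpa using measurable_fst
  · intro j
    simpa [Function.comp_def] using (measurable_pi_apply j).comp measurable_snd

lemma lintegral_pi_cons {n : ℕ} (F : (Fin (n+1) → S) → ℝ≥0∞) (hF : Measurable F) :
    ∫⁻ w, F w ∂(Measure.pi fun _ => μ) =
      ∫⁻ x, ∫⁻ y, F (Fin.cons x y) ∂(Measure.pi fun _ => μ) ∂μ := by
  have mp := measurePreserving_piFinSuccAbove (fun _ : Fin (n+1) => μ) 0
  have hG : Measurable (fun p : S × (Fin n → S) => F (Fin.cons p.1 p.2)) :=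
    hF.comp measurable_finCons
  have h1 : ∫⁻ w, F w ∂(Measure.pi fun _ => μ)
      = ∫⁻ p : S × (Fin n → S), F (Fin.cons p.1 p.2)
          ∂(μ.prod (Measure.pi fun _ => μ)) := by
    rw [← mp.lintegral_comp hG]
    refine lintegral_congr fun w => ?_
    congr 1
    have : (MeasurableEquiv.piFinSuccAbove (fun _ : Fin (n+1) => S) 0) w
        = (w 0, fun j => w j.succ) := by
      simp [MeasurableEquiv.piFinSuccAbove]; rfl
    rw [this]
    exact (Fin.cons_self_tail w).symm
  rw [h1, lintegral_prod _ hG.aemeasurable]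

lemma lintegral_pi_comp_perm {n : ℕ} (σ : Equiv.Perm (Fin n))
    (F : (Fin n → S) → ℝ≥0∞) (hF : Measurable F) :
    ∫⁻ w, F (w ∘ σ) ∂(Measure.pi fun _ => μ) = ∫⁻ w, F w ∂(Measure.pi fun _ => μ) := by
  have mp := measurePreserving_piCongrLeft (fun _ : Fin n => μ) σ.symm
  have key : ∀ w : Fin n → S,
      (MeasurableEquiv.piCongrLeft (fun _ : Fin n => S) σ.symm) w = w ∘ σ := by
    intro w
    funext j
    have := Equiv.piCongrLeft_apply_apply (fun _ : Fin n => S) σ.symm w (σ j)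
    simpa [MeasurableEquiv.piCongrLeft] using this
  calc ∫⁻ w, F (w ∘ σ) ∂(Measure.pi fun _ => μ)
      = ∫⁻ w, F ((MeasurableEquiv.piCongrLeft (fun _ : Fin n => S) σ.symm) w)
          ∂(Measure.pi fun _ => μ) := by
        refine lintegral_congr fun w => ?_
        rw [key w]
    _ = ∫⁻ w, F w ∂(Measure.pi fun _ => μ) := mp.lintegral_comp hF

lemma ae_pi_coords {n : ℕ} {s : Set S} (hs : MeasurableSet s) (hμs : ∀ᵐ x ∂μ, x ∈ s) :
    ∀ᵐ w ∂(Measure.pi fun _ : Fin n => μ), ∀ i, w i ∈ s := by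
  have hnull : μ sᶜ = 0 := by
    rw [ae_iff] at hμs; exact hμs
  have hcoord : ∀ i : Fin n,
      (Measure.pi fun _ : Fin n => μ) {w | w i ∈ sᶜ} = 0 := by
    intro i
    classical
    have hset : {w : Fin n → S | w i ∈ sᶜ}
        = Set.pi Set.univ (fun j => if j = i then sᶜ else Set.univ) := by
      ext w
      simp only [Set.mem_setOf_eq, Set.mem_pi, Set.mem_univ, forall_true_left]
      constructor
      · intro h j; by_cases hj : j = i <;> simp [hj, h]
      · intro h; have := h i; simpa using this
    rw [hset, Measure.pi_pi]
    refine Finset.prod_eq_zero (Finset.mem_univ i) ?_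
    simp [hnull]
  rw [ae_iff]
  have : {w : Fin n → S | ¬ ∀ i, w i ∈ s} ⊆ ⋃ i, {w | w i ∈ sᶜ} := by
    intro w hw
    simp only [Set.mem_setOf_eq, not_forall] at hw
    obtain ⟨i, hi⟩ := hw
    exact Set.mem_iUnion.2 ⟨i, hi⟩
  refine measure_mono_null this ?_
  exact measure_iUnion_null fun i => hcoord i

end Helpers

section Meas

variable {S : Type*} [MeasurableSpace S] {μ : Measure S} [IsProbabilityMeasure μ]
  {κ : (m : ℕ) → (Fin (m + 2) → S) → ℝ≥0∞}

lemma measurable_finCons' {n : ℕ} :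
    Measurable (fun p : S × (Fin n → S) => Fin.cons p.1 p.2 : S × (Fin n → S) → (Fin (n+1) → S)) := by
  rw [measurable_pi_iff]
  intro i
  refine Fin.cases ?_ ?_ i
  · simpa using measurable_fst
  · intro j
    simpa [Function.comp_def] using (measurable_pi_apply j).comp measurable_snd

lemma measurable_sop_integrand (hmeas : HyperkernelMeasurable κ) {f : S → ℝ}
    (hf : Measurable f) (m : ℕ) :
    Measurable (fun p : S × (Fin (m+1) → S) =>
      κ m (Fin.cons p.1 p.2) * ENNReal.ofReal (1 - ∏ i, (1 - f (p.2 i)))) := by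
  refine Measurable.mul ((hmeas m).comp measurable_finCons') ?_
  refine ENNReal.measurable_ofReal.comp ?_
  refine Measurable.const_sub ?_ 1
  refine Finset.measurable_prod _ fun i _ => ?_
  exact (measurable_const.sub (hf.comp ((measurable_pi_apply i).comp measurable_snd)))

lemma measurable_sop (hmeas : HyperkernelMeasurable κ) {f : S → ℝ} (hf : Measurable f) :
    Measurable (Sop μ κ f) := by
  refine Measurable.ennreal_tsum fun m => ?_
  refine Measurable.const_mul ?_ _
  exact (measurable_sop_integrand hmeas hf m).lintegral_prod_right'

lemma measurable_edge_integrand (hmeas : HyperkernelMeasurable κ) (m : ℕ) :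
    Measurable (fun q : (S × S) × (Fin m → S) =>
      κ m (Fin.cons q.1.1 (Fin.cons q.1.2 q.2))) := by
  have h1 : Measurable (fun q : (S × S) × (Fin m → S) =>
      (q.1.2, q.2) : (S × S) × (Fin m → S) → S × (Fin m → S)) :=
    ((measurable_snd.comp measurable_fst).prodMk measurable_snd)
  have h2 : Measurable (fun q : (S × S) × (Fin m → S) =>
      (q.1.1, Fin.cons q.1.2 q.2) : (S × S) × (Fin m → S) → S × (Fin (m+1) → S)) :=
    ((measurable_fst.comp measurable_fst).prodMk (measurable_finCons'.comp h1))
  exact (hmeas m).comp (measurable_finCons'.comp h2)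

lemma measurable_edgeKernel (hmeas : HyperkernelMeasurable κ) :
    Measurable (fun p : S × S => edgeKernel μ κ p.1 p.2) := by
  refine Measurable.ennreal_tsum fun m => ?_
  refine Measurable.const_mul ?_ _
  exact (measurable_edge_integrand hmeas m).lintegral_prod_right'

lemma measurable_edgeKernel_right (hmeas : HyperkernelMeasurable κ) (x : S) :
    Measurable (fun y : S => edgeKernel μ κ x y) := by
  have := (measurable_edgeKernel (μ := μ) hmeas).comp
    ((measurable_const (a := x)).prodMk measurable_id)
  simpa [Function.comp_def] using this

end Meas

section Comb

variable {ι : Type*} [LinearOrder ι]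

/-- Telescoping: `∏ a - ∏ b = ∑ i (a i - b i) * (∏_{j<i} a j) * (∏_{j>i} b j)`. -/
lemma prod_sub_prod (s : Finset ι) (a b : ι → ℝ) :
    ∏ i ∈ s, a i - ∏ i ∈ s, b i =
      ∑ i ∈ s, (a i - b i) * (∏ j ∈ s with j < i, a j) * ∏ j ∈ s with i < j, b j := by
  have h := Finset.prod_add_ordered s b (fun i => a i - b i)
  simp only [add_sub_cancel] at h
  rw [h]; ring_nf

/-- Telescoping: `1 - ∏ a = ∑ i (1 - a i) * ∏_{j>i} a j`. -/
lemma one_sub_prod (s : Finset ι) (a : ι → ℝ) :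
    1 - ∏ i ∈ s, a i = ∑ i ∈ s, (1 - a i) * ∏ j ∈ s with i < j, a j := by
  have h := prod_sub_prod s (fun _ => (1:ℝ)) a
  simp only [Finset.prod_const_one, Finset.prod_filter] at h ⊢
  rw [h]
  refine Finset.sum_congr rfl fun i _ => by ring

end Comb

section Key

variable {n : ℕ}

private lemma sum_erase_comm (X : Fin n → Fin n → ℝ) :
    ∑ j, ∑ i ∈ univ.erase j, X j i = ∑ i, ∑ j ∈ univ.erase i, X j i := by
  classical
  have h1 : ∀ j : Fin n, ∑ i ∈ univ.erase j, X j i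
      = ∑ i, if i ≠ j then X j i else 0 := by
    intro j
    rw [← Finset.filter_ne' (univ : Finset (Fin n)) j, Finset.sum_filter]
  have h2 : ∀ i : Fin n, ∑ j ∈ univ.erase i, X j i
      = ∑ j, if i ≠ j then X j i else 0 := by
    intro i
    rw [← Finset.filter_ne' (univ : Finset (Fin n)) i, Finset.sum_filter]
    refine Finset.sum_congr rfl fun j _ => ?_
    refine if_congr ?_ rfl rfl
    exact ne_comm
  simp only [h1, h2]
  exact Finset.sum_comm

/-- The product bound: mixed truncated product is at most the `a`-product. -/
private lemma prodAB_le (a b : Fin n → ℝ)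
    (hba : ∀ i, b i ≤ a i) (hb0 : ∀ i, 0 ≤ b i) (ha1 : ∀ i, a i ≤ 1)
    (i j : Fin n) :
    (∏ k ∈ (univ.erase j) with k < i, a k) * (∏ k ∈ (univ.erase j) with i < k, b k)
      ≤ ∏ k ∈ (univ.erase i) with j < k, a k := by
  classical
  have ha0 : ∀ k, 0 ≤ a k := fun k => (hb0 k).trans (hba k)
  have hb1 : ∀ k, b k ≤ 1 := fun k => (hba k).trans (ha1 k)
  set c : Fin n → ℝ := fun k => if k < i then a k else b k with hc
  have hc0 : ∀ k, 0 ≤ c k := fun k => by by_cases h : k < i <;> simp [hc, h, ha0 k, hb0 k]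
  have hc1 : ∀ k, c k ≤ 1 := fun k => by by_cases h : k < i <;> simp [hc, h, ha1 k, hb1 k]
  have hca : ∀ k, c k ≤ a k := fun k => by by_cases h : k < i <;> simp [hc, h, hba k, le_refl]
  set U1 := (univ.erase j).filter (· < i) with hU1
  set U2 := (univ.erase j).filter (i < ·) with hU2
  set U := U1 ∪ U2 with hU
  set T := (univ.erase i).filter (j < ·) with hT
  have h1 : ∏ k ∈ U1, a k = ∏ k ∈ U1, c k := by
    refine Finset.prod_congr rfl fun k hk => ?_
    rw [hU1, Finset.mem_filter] at hk
    simp [hc, hk.2]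
  have h2 : ∏ k ∈ U2, b k = ∏ k ∈ U2, c k := by
    refine Finset.prod_congr rfl fun k hk => ?_
    rw [hU2, Finset.mem_filter] at hk
    simp [hc, not_lt_of_gt hk.2]
  have hdisj : Disjoint U1 U2 := by
    rw [hU1, hU2]
    rw [Finset.disjoint_left]
    intro k hk1 hk2
    rw [Finset.mem_filter] at hk1 hk2
    exact absurd (lt_trans hk1.2 hk2.2) (lt_irrefl k)
  have hUc : (∏ k ∈ U1, a k) * (∏ k ∈ U2, b k) = ∏ k ∈ U, c k := by
    rw [h1, h2, hU, Finset.prod_union hdisj]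
  have hTU : T ⊆ U := by
    intro k hk
    rw [hT, Finset.mem_filter, Finset.mem_erase] at hk
    obtain ⟨⟨hki, _⟩, hjk⟩ := hk
    rw [hU, Finset.mem_union, hU1, hU2, Finset.mem_filter, Finset.mem_filter,
      Finset.mem_erase]
    rcases lt_or_gt_of_ne hki with h | h
    · exact Or.inl ⟨⟨ne_of_gt hjk, Finset.mem_univ k⟩, h⟩
    · exact Or.inr ⟨⟨ne_of_gt hjk, Finset.mem_univ k⟩, h⟩
  calc (∏ k ∈ U1, a k) * (∏ k ∈ U2, b k) = ∏ k ∈ U, c k := hUc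
    _ = (∏ k ∈ U \ T, c k) * ∏ k ∈ T, c k := (Finset.prod_sdiff hTU).symm
    _ ≤ 1 * ∏ k ∈ T, c k := by
        refine mul_le_mul_of_nonneg_right ?_ (Finset.prod_nonneg fun k _ => hc0 k)
        exact Finset.prod_le_one (fun k _ => hc0 k) (fun k _ => hc1 k)
    _ = ∏ k ∈ T, c k := one_mul _
    _ ≤ ∏ k ∈ T, a k := Finset.prod_le_prod (fun k _ => hc0 k) (fun k _ => hca k)

/-- The key combinatorial inequality. -/
lemma key_comb_ineq (a b : Fin n → ℝ) (hba : ∀ i, b i ≤ a i)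
    (hb0 : ∀ i, 0 ≤ b i) (ha1 : ∀ i, a i ≤ 1) :
    ∑ j, (1 - a j) * (1 - ∏ k ∈ univ.erase j, b k) ≤
      ∑ j, (1 - b j) * (1 - ∏ k ∈ univ.erase j, a k) := by
  classical
  have ha0 : ∀ k, 0 ≤ a k := fun k => (hb0 k).trans (hba k)
  rw [← sub_nonneg, ← Finset.sum_sub_distrib]
  have hterm : ∀ j : Fin n,
      (1 - b j) * (1 - ∏ k ∈ univ.erase j, a k)
        - (1 - a j) * (1 - ∏ k ∈ univ.erase j, b k)
      = (a j - b j) * (1 - ∏ k ∈ univ.erase j, a k)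
        - (1 - a j) * ((∏ k ∈ univ.erase j, a k) - ∏ k ∈ univ.erase j, b k) := by
    intro j; ring
  rw [Finset.sum_congr rfl fun j _ => hterm j]
  rw [Finset.sum_sub_distrib]
  have hsecond : ∑ j, (1 - a j) * ((∏ k ∈ univ.erase j, a k) - ∏ k ∈ univ.erase j, b k)
      = ∑ i, (a i - b i) *
          ∑ j ∈ univ.erase i, (1 - a j) *
            ((∏ k ∈ (univ.erase j) with k < i, a k) *
              ∏ k ∈ (univ.erase j) with i < k, b k) := by
    have hstep : ∀ j : Fin n,
        (1 - a j) * ((∏ k ∈ univ.erase j, a k) - ∏ k ∈ univ.erase j, b k)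
        = ∑ i ∈ univ.erase j, (1 - a j) * ((a i - b i) *
            ((∏ k ∈ (univ.erase j) with k < i, a k) *
              ∏ k ∈ (univ.erase j) with i < k, b k)) := by
      intro j
      rw [prod_sub_prod (univ.erase j) a b, Finset.mul_sum]
      refine Finset.sum_congr rfl fun i _ => by ring
    rw [Finset.sum_congr rfl fun j _ => hstep j]
    rw [sum_erase_comm (fun j i => (1 - a j) * ((a i - b i) *
      ((∏ k ∈ (univ.erase j) with k < i, a k) *
        ∏ k ∈ (univ.erase j) with i < k, b k)))]
    refine Finset.sum_congr rfl fun i _ => ?_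
    rw [Finset.mul_sum]
    refine Finset.sum_congr rfl fun j _ => by ring
  rw [hsecond]
  rw [← Finset.sum_sub_distrib]
  refine Finset.sum_nonneg fun i _ => ?_
  rw [← mul_sub]
  refine mul_nonneg (by linarith [hba i]) ?_
  rw [sub_nonneg]
  calc ∑ j ∈ univ.erase i, (1 - a j) *
        ((∏ k ∈ (univ.erase j) with k < i, a k) *
          ∏ k ∈ (univ.erase j) with i < k, b k)
      ≤ ∑ j ∈ univ.erase i, (1 - a j) * ∏ k ∈ (univ.erase i) with j < k, a k := by
        refine Finset.sum_le_sum fun j _ => ?_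
        exact mul_le_mul_of_nonneg_left (prodAB_le a b hba hb0 ha1 i j)
          (by linarith [ha1 j])
    _ = 1 - ∏ k ∈ univ.erase i, a k := (one_sub_prod (univ.erase i) a).symm

end Key

lemma prod_erase_eq_succAbove {M} [CommMonoid M] {n : ℕ} (j : Fin (n+1)) (h : Fin (n+1) → M) :
    ∏ k ∈ univ.erase j, h k = ∏ i : Fin n, h (j.succAbove i) := by
  have himg : univ.map (Fin.succAboveEmb j) = univ.erase j := by
    ext k
    simp [Fin.exists_succAbove_eq_iff]
  rw [← himg, Finset.prod_map]
  rfl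

lemma image_perm_erase {n : ℕ} (σ : Equiv.Perm (Fin n)) (p : Fin n) :
    Finset.image σ (univ.erase p) = univ.erase (σ p) := by
  ext k
  constructor
  · intro hk
    obtain ⟨x, hx, rfl⟩ := Finset.mem_image.mp hk
    have hxp := (Finset.mem_erase.mp hx).1
    exact Finset.mem_erase.mpr ⟨fun h => hxp (σ.injective h), Finset.mem_univ _⟩
  · intro hk
    have hkp := (Finset.mem_erase.mp hk).1
    have h1 : σ.symm k ≠ p := fun h => hkp (by rw [← h, Equiv.apply_symm_apply])
    exact Finset.mem_image.mpr ⟨σ.symm k,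
      Finset.mem_erase.mpr ⟨h1, Finset.mem_univ _⟩, Equiv.apply_symm_apply σ k⟩

section Sym

variable {S : Type*} [MeasurableSpace S] {μ : Measure S} [IsProbabilityMeasure μ]
  {κ : (m : ℕ) → (Fin (m + 2) → S) → ℝ≥0∞}

/-- Symmetrized integrand. -/
noncomputable def symInt (κ : (m : ℕ) → (Fin (m + 2) → S) → ℝ≥0∞)
    (u v : S → ℝ) (m : ℕ) (j : Fin (m+2)) (w : Fin (m+2) → S) : ℝ≥0∞ :=
  κ m w * ENNReal.ofReal (u (w j) * (1 - ∏ k ∈ univ.erase j, (1 - v (w k))))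

lemma measurable_symInt (hmeas : HyperkernelMeasurable κ) {u v : S → ℝ}
    (hu : Measurable u) (hv : Measurable v) (m : ℕ) (j : Fin (m+2)) :
    Measurable (symInt κ u v m j) := by
  refine (hmeas m).mul (ENNReal.measurable_ofReal.comp ?_)
  refine Measurable.mul (hu.comp (measurable_pi_apply j)) ?_
  refine Measurable.const_sub ?_ 1
  exact Finset.measurable_prod _ fun k _ =>
    (measurable_const.sub (hv.comp (measurable_pi_apply k)))

lemma symInt_swap (hsymm : HyperkernelSymm κ) (u v : S → ℝ) (m : ℕ) (j : Fin (m+2))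
    (w : Fin (m+2) → S) :
    symInt κ u v m 0 (w ∘ Equiv.swap 0 j) = symInt κ u v m j w := by
  unfold symInt
  have h1 : κ m (w ∘ Equiv.swap 0 j) = κ m w := hsymm m _ w
  have h2 : (w ∘ Equiv.swap 0 j) 0 = w j := by simp
  have h3 : ∏ k ∈ univ.erase 0, (1 - v ((w ∘ Equiv.swap 0 j) k))
      = ∏ k ∈ univ.erase j, (1 - v (w k)) := by
    rw [show univ.erase j = Finset.image (Equiv.swap 0 j) (univ.erase 0) by
      rw [image_perm_erase]; simp]
    rw [Finset.prod_image (fun x _ y _ h => (Equiv.swap 0 j).injective h)]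
    rfl
  rw [h1, h2, h3]

lemma lintegral_symInt_eq (hmeas : HyperkernelMeasurable κ)
    (hsymm : HyperkernelSymm κ) {u v : S → ℝ}
    (hu : Measurable u) (hv : Measurable v) (m : ℕ) (j : Fin (m+2)) :
    ∫⁻ w, symInt κ u v m j w ∂(Measure.pi fun _ => μ)
      = ∫⁻ w, symInt κ u v m 0 w ∂(Measure.pi fun _ => μ) := by
  calc ∫⁻ w, symInt κ u v m j w ∂(Measure.pi fun _ => μ)
      = ∫⁻ w, symInt κ u v m 0 (w ∘ Equiv.swap 0 j) ∂(Measure.pi fun _ => μ) := by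
        refine lintegral_congr fun w => ?_
        rw [symInt_swap hsymm]
    _ = ∫⁻ w, symInt κ u v m 0 w ∂(Measure.pi fun _ => μ) :=
        lintegral_pi_comp_perm μ _ _ (measurable_symInt hmeas hu hv m 0)

/-- Master representation of `∫ u · S_κ(v) dμ` as a fully symmetrized sum. -/
lemma lintegral_mul_sop (hmeas : HyperkernelMeasurable κ) (hsymm : HyperkernelSymm κ)
    {u v : S → ℝ} (hu : Measurable u) (hv : Measurable v)
    (hu0 : ∀ x, 0 ≤ u x) (hv01 : ∀ x, 0 ≤ v x ∧ v x ≤ 1) :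
    ∫⁻ x, ENNReal.ofReal (u x) * Sop μ κ v x ∂μ
      = ∑' m : ℕ, ∫⁻ w : Fin (m+2) → S,
          κ m w * ENNReal.ofReal
            (∑ j, u (w j) * (1 - ∏ k ∈ univ.erase j, (1 - v (w k))))
          ∂(Measure.pi fun _ => μ) := by
  have hprodmem : ∀ (k : ℕ) (y : Fin k → S), (0:ℝ) ≤ ∏ i, (1 - v (y i))
      ∧ ∏ i, (1 - v (y i)) ≤ 1 := by
    intro k y
    constructor
    · exact Finset.prod_nonneg fun i _ => by linarith [(hv01 (y i)).2]
    · exact Finset.prod_le_one (fun i _ => by linarith [(hv01 (y i)).2])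
        (fun i _ => by linarith [(hv01 (y i)).1])
  -- step 1: exchange tsum and lintegral, push the constant inside
  have hmeasInt : ∀ m : ℕ, Measurable (fun x : S =>
      ENNReal.ofReal (u x) * (((m : ℝ≥0∞) + 2) *
        ∫⁻ y : Fin (m + 1) → S,
          κ m (Fin.cons x y) * ENNReal.ofReal (1 - ∏ i, (1 - v (y i)))
          ∂(Measure.pi fun _ => μ))) := by
    intro m
    refine (ENNReal.measurable_ofReal.comp hu).mul (Measurable.const_mul ?_ _)
    have : Measurable (fun p : S × (Fin (m+1) → S) =>
        κ m (Fin.cons p.1 p.2) * ENNReal.ofReal (1 - ∏ i, (1 - v (p.2 i)))) := by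
      refine Measurable.mul ((hmeas m).comp (measurable_finCons)) ?_
      refine ENNReal.measurable_ofReal.comp ?_
      refine Measurable.const_sub ?_ 1
      exact Finset.measurable_prod _ fun i _ =>
        (measurable_const.sub (hv.comp ((measurable_pi_apply i).comp measurable_snd)))
    exact this.lintegral_prod_right'
  have step1 : ∫⁻ x, ENNReal.ofReal (u x) * Sop μ κ v x ∂μ
      = ∑' m : ℕ, ∫⁻ x, ENNReal.ofReal (u x) * (((m : ℝ≥0∞) + 2) *
          ∫⁻ y : Fin (m + 1) → S,
            κ m (Fin.cons x y) * ENNReal.ofReal (1 - ∏ i, (1 - v (y i)))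
            ∂(Measure.pi fun _ => μ)) ∂μ := by
    unfold Sop
    rw [← lintegral_tsum fun m => (hmeasInt m).aemeasurable]
    refine lintegral_congr fun x => ?_
    rw [ENNReal.tsum_mul_left]
  -- step 2: identify each summand with the symmetrized integral at index 0
  have step2 : ∀ m : ℕ, ∫⁻ x, ENNReal.ofReal (u x) * (((m : ℝ≥0∞) + 2) *
          ∫⁻ y : Fin (m + 1) → S,
            κ m (Fin.cons x y) * ENNReal.ofReal (1 - ∏ i, (1 - v (y i)))
            ∂(Measure.pi fun _ => μ)) ∂μ
      = ((m : ℝ≥0∞) + 2) * ∫⁻ w, symInt κ u v m 0 w ∂(Measure.pi fun _ => μ) := by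
    intro m
    have hinner : ∀ x : S, ENNReal.ofReal (u x) * (((m : ℝ≥0∞) + 2) *
          ∫⁻ y : Fin (m + 1) → S,
            κ m (Fin.cons x y) * ENNReal.ofReal (1 - ∏ i, (1 - v (y i)))
            ∂(Measure.pi fun _ => μ))
        = ((m : ℝ≥0∞) + 2) * ∫⁻ y : Fin (m + 1) → S,
            symInt κ u v m 0 (Fin.cons x y) ∂(Measure.pi fun _ => μ) := by
      intro x
      rw [mul_left_comm]
      congr 1
      rw [← lintegral_const_mul _ (by
        refine Measurable.mul ((hmeas m).comp (measurable_finCons.comp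
          ((measurable_const (a := x)).prodMk measurable_id))) ?_
        refine ENNReal.measurable_ofReal.comp ?_
        refine Measurable.const_sub ?_ 1
        exact Finset.measurable_prod _ fun i _ =>
          (measurable_const.sub (hv.comp (measurable_pi_apply i))))]
      refine lintegral_congr fun y => ?_
      unfold symInt
      rw [Fin.cons_zero]
      rw [ENNReal.ofReal_mul (hu0 x)]
      have : ∏ k ∈ univ.erase (0 : Fin (m+2)), (1 - v ((Fin.cons x y : Fin (m+2) → S) k))
          = ∏ i, (1 - v (y i)) := by
        rw [prod_erase_eq_succAbove]
        refine Finset.prod_congr rfl fun i _ => ?_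
        have h0 : (0 : Fin (m+2)).succAbove i = i.succ := rfl
        rw [h0]
        norm_num [Fin.cons_succ]
      rw [this]
      try ring
    rw [lintegral_congr hinner]
    rw [lintegral_const_mul _ (by
      exact (((measurable_symInt hmeas hu hv m 0).comp measurable_finCons)).lintegral_prod_right')]
    congr 1
    exact (lintegral_pi_cons μ _ (measurable_symInt hmeas hu hv m 0)).symm
  -- step 3: (m+2) * symInt at 0 = sum over j of symInt at j = integral of big sum
  have step3 : ∀ m : ℕ, ((m : ℝ≥0∞) + 2) * ∫⁻ w, symInt κ u v m 0 w ∂(Measure.pi fun _ => μ)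
      = ∫⁻ w : Fin (m+2) → S,
          κ m w * ENNReal.ofReal
            (∑ j, u (w j) * (1 - ∏ k ∈ univ.erase j, (1 - v (w k))))
          ∂(Measure.pi fun _ => μ) := by
    intro m
    have h1 : ((m : ℝ≥0∞) + 2) * ∫⁻ w, symInt κ u v m 0 w ∂(Measure.pi fun _ => μ)
        = ∑ j : Fin (m+2), ∫⁻ w, symInt κ u v m j w ∂(Measure.pi fun _ => μ) := by
      rw [Finset.sum_congr rfl fun j _ => lintegral_symInt_eq hmeas hsymm hu hv m j]
      rw [Finset.sum_const, Finset.card_univ, Fintype.card_fin, nsmul_eq_mul]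
      congr 1
      push_cast
      ring
    rw [h1, ← lintegral_finset_sum _ fun j _ => measurable_symInt hmeas hu hv m j]
    refine lintegral_congr fun w => ?_
    unfold symInt
    rw [← Finset.mul_sum]
    congr 1
    rw [ENNReal.ofReal_sum_of_nonneg]
    intro j _
    refine mul_nonneg (hu0 (w j)) ?_
    have h0 : (0:ℝ) ≤ ∏ k ∈ univ.erase j, (1 - v (w k)) :=
      Finset.prod_nonneg fun k _ => by linarith [(hv01 (w k)).2]
    have h1 : ∏ k ∈ univ.erase j, (1 - v (w k)) ≤ 1 :=
      Finset.prod_le_one (fun k _ => by linarith [(hv01 (w k)).2])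
        (fun k _ => by linarith [(hv01 (w k)).1])
    linarith
  rw [step1]
  exact tsum_congr fun m => (step2 m).trans (step3 m)

end Sym

section Final

variable {S : Type*} [MeasurableSpace S] {μ : Measure S} [IsProbabilityMeasure μ]
  {κ : (m : ℕ) → (Fin (m + 2) → S) → ℝ≥0∞}

lemma measurable_cons_const (x : S) {n : ℕ} :
    Measurable (fun w : Fin n → S => (Fin.cons x w : Fin (n+1) → S)) :=
  measurable_finCons.comp ((measurable_const).prodMk measurable_id)

/-- The fundamental cross inequality `∫ f·S(g) ≤ ∫ g·S(f)` for `f ≤ g`. -/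
lemma cross_le (hmeas : HyperkernelMeasurable κ) (hsymm : HyperkernelSymm κ)
    {f g : S → ℝ} (hf : Measurable f) (hg : Measurable g)
    (hf01 : ∀ x, 0 ≤ f x ∧ f x ≤ 1) (hg01 : ∀ x, 0 ≤ g x ∧ g x ≤ 1)
    (hfg : ∀ x, f x ≤ g x) :
    ∫⁻ x, ENNReal.ofReal (f x) * Sop μ κ g x ∂μ
      ≤ ∫⁻ x, ENNReal.ofReal (g x) * Sop μ κ f x ∂μ := by
  rw [lintegral_mul_sop hmeas hsymm hf hg (fun x => (hf01 x).1) hg01,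
      lintegral_mul_sop hmeas hsymm hg hf (fun x => (hg01 x).1) hf01]
  refine ENNReal.tsum_le_tsum fun m => ?_
  refine lintegral_mono fun w => ?_
  refine mul_le_mul_right (ENNReal.ofReal_le_ofReal ?_) _
  have hkey := key_comb_ineq (fun k => 1 - f (w k)) (fun k => 1 - g (w k))
    (fun k => by linarith [hfg (w k)])
    (fun k => by linarith [(hg01 (w k)).2])
    (fun k => by linarith [(hf01 (w k)).1])
  calc ∑ j, f (w j) * (1 - ∏ k ∈ univ.erase j, (1 - g (w k)))
      = ∑ j, (1 - (1 - f (w j))) * (1 - ∏ k ∈ univ.erase j, (1 - g (w k))) := by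
        refine Finset.sum_congr rfl fun j _ => by ring
    _ ≤ ∑ j, (1 - (1 - g (w j))) * (1 - ∏ k ∈ univ.erase j, (1 - f (w k))) := hkey
    _ = ∑ j, g (w j) * (1 - ∏ k ∈ univ.erase j, (1 - f (w k))) := by
        refine Finset.sum_congr rfl fun j _ => by ring

/-- The integral of `S_κ(f)` is bounded by the integrability sum. -/
lemma lintegral_sop_le (hmeas : HyperkernelMeasurable κ)
    {f : S → ℝ} (hf : Measurable f) (hf01 : ∀ x, 0 ≤ f x ∧ f x ≤ 1) :
    ∫⁻ x, Sop μ κ f x ∂μ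
      ≤ ∑' m : ℕ, ((m : ℝ≥0∞) + 2) *
          ∫⁻ v : Fin (m + 2) → S, κ m v ∂(Measure.pi fun _ => μ) := by
  unfold Sop
  rw [lintegral_tsum fun m => (Measurable.const_mul
    ((measurable_sop_integrand hmeas hf m).lintegral_prod_right') _).aemeasurable]
  refine ENNReal.tsum_le_tsum fun m => ?_
  rw [lintegral_const_mul _ ((measurable_sop_integrand hmeas hf m).lintegral_prod_right')]
  refine mul_le_mul_right ?_ _
  calc ∫⁻ x, ∫⁻ y : Fin (m+1) → S,
        κ m (Fin.cons x y) * ENNReal.ofReal (1 - ∏ i, (1 - f (y i)))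
        ∂(Measure.pi fun _ => μ) ∂μ
      ≤ ∫⁻ x, ∫⁻ y : Fin (m+1) → S, κ m (Fin.cons x y) ∂(Measure.pi fun _ => μ) ∂μ := by
        refine lintegral_mono fun x => lintegral_mono fun y => ?_
        calc κ m (Fin.cons x y) * ENNReal.ofReal (1 - ∏ i, (1 - f (y i)))
            ≤ κ m (Fin.cons x y) * 1 := by
              refine mul_le_mul_right ?_ _
              refine ENNReal.ofReal_le_one.mpr ?_
              have : (0:ℝ) ≤ ∏ i, (1 - f (y i)) :=
                Finset.prod_nonneg fun i _ => by linarith [(hf01 (y i)).2]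
              linarith
          _ = κ m (Fin.cons x y) := mul_one _
    _ = ∫⁻ v : Fin (m + 2) → S, κ m v ∂(Measure.pi fun _ => μ) :=
        (lintegral_pi_cons μ (κ m) (hmeas m)).symm

/-- `S_κ` only depends on the `μ`-a.e. class of its argument. -/
lemma sop_congr_ae {f g : S → ℝ} (hf : Measurable f) (hg : Measurable g)
    (hae : f =ᵐ[μ] g) (x : S) : Sop μ κ f x = Sop μ κ g x := by
  unfold Sop
  refine tsum_congr fun m => ?_
  congr 1
  refine lintegral_congr_ae ?_
  have hs : MeasurableSet {z : S | f z = g z} := measurableSet_eq_fun hf hg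
  filter_upwards [ae_pi_coords μ hs hae] with y hy
  have hp : ∏ i, (1 - f (y i)) = ∏ i, (1 - g (y i)) :=
    Finset.prod_congr rfl fun i _ => by rw [hy i]
  rw [hp]

lemma sop_zero_fun (x : S) : Sop μ κ (fun _ => (0:ℝ)) x = 0 := by
  unfold Sop
  simp

lemma expNeg_zero' : expNeg 0 = 1 := by simp [expNeg]

lemma phi_eq_zero_iff {f : S → ℝ} {x : S} : Phi μ κ f x = 0 ↔ Sop μ κ f x = 0 := by
  unfold Phi
  constructor
  · intro h
    have h1 : expNeg (Sop μ κ f x) = 1 := by linarith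
    by_cases htop : Sop μ κ f x = ⊤
    · rw [htop] at h1; simp [expNeg] at h1
    · rw [expNeg, if_neg htop] at h1
      have h2 := congrArg Real.log h1
      rw [Real.log_exp, Real.log_one] at h2
      have h3 : (Sop μ κ f x).toReal = 0 := by linarith
      rcases (ENNReal.toReal_eq_zero_iff _).mp h3 with h | h
      · exact h
      · exact absurd h htop
  · intro h
    rw [h, expNeg_zero']; ring

/-- The strict log-ratio inequality coming from strict concavity of `log`. -/
lemma neg_log_ratio {s t : ℝ} (hs : 0 < s) (hst : s < t) (ht1 : t < 1) :
    t * (-Real.log (1 - s)) < s * (-Real.log (1 - t)) := by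
  have ht0 : 0 < t := hs.trans hst
  have h1t : (0:ℝ) < 1 - t := by linarith
  have hne : (1 - t : ℝ) ≠ 1 := by intro h; linarith
  have ha : (0:ℝ) < s / t := div_pos hs ht0
  have hb : (0:ℝ) < 1 - s / t := by
    have : s / t < 1 := (div_lt_one ht0).mpr hst
    linarith
  have hsc := strictConcaveOn_log_Ioi.2 (Set.mem_Ioi.mpr h1t)
    (Set.mem_Ioi.mpr one_pos) hne ha hb (by ring)
  have hpt : (s / t) • (1 - t) + (1 - s / t) • (1:ℝ) = 1 - s := by
    field_simp
    linear_combination (1 - s) * mul_inv_cancel₀ ht0.ne'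
  rw [hpt] at hsc
  simp only [smul_eq_mul, Real.log_one, mul_zero, add_zero] at hsc
  have h2 : t * (s / t * Real.log (1 - t)) < t * Real.log (1 - s) :=
    (mul_lt_mul_iff_right₀ ht0).mpr hsc
  have h3 : t * (s / t * Real.log (1 - t)) = s * Real.log (1 - t) := by
    field_simp
  nlinarith [h2, h3]

lemma cons_cons_swap {m : ℕ} (x y : S) (z : Fin m → S) :
    (Fin.cons y (Fin.cons x z) : Fin (m+2) → S) ∘ (Equiv.swap 0 1)
      = (Fin.cons x (Fin.cons y z) : Fin (m+2) → S) := by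
  funext k
  refine Fin.cases ?_ (fun j => ?_) k
  · have h0 : (Equiv.swap (0 : Fin (m+2)) 1) 0 = 1 := Equiv.swap_apply_left 0 1
    simp only [Function.comp_apply, h0, Fin.cons_zero]
    rw [show (1 : Fin (m+2)) = (0 : Fin (m+1)).succ from rfl, Fin.cons_succ, Fin.cons_zero]
  · refine Fin.cases ?_ (fun i => ?_) j
    · have h1 : (Equiv.swap (0 : Fin (m+2)) 1) ((0 : Fin (m+1)).succ) = 0 := by
        rw [show ((0 : Fin (m+1)).succ : Fin (m+2)) = 1 from rfl]
        exact Equiv.swap_apply_right 0 1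
      simp only [Function.comp_apply, h1, Fin.cons_zero, Fin.cons_succ]
    · have hne0 : (i.succ.succ : Fin (m+2)) ≠ 0 := Fin.succ_ne_zero _
      have hne1 : (i.succ.succ : Fin (m+2)) ≠ 1 := by
        rw [show (1 : Fin (m+2)) = (0 : Fin (m+1)).succ from rfl]
        intro h
        exact Fin.succ_ne_zero i (Fin.succ_injective _ h)
      simp only [Function.comp_apply, Equiv.swap_apply_of_ne_of_ne hne0 hne1,
        Fin.cons_succ]

lemma edgeKernel_symm (hsymm : HyperkernelSymm κ) (x y : S) :
    edgeKernel μ κ x y = edgeKernel μ κ y x := by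
  unfold edgeKernel
  refine tsum_congr fun m => ?_
  congr 1
  refine lintegral_congr fun z => ?_
  calc κ m (Fin.cons x (Fin.cons y z))
      = κ m ((Fin.cons y (Fin.cons x z) : Fin (m+2) → S) ∘ (Equiv.swap 0 1)) := by
        rw [cons_cons_swap]
    _ = κ m (Fin.cons y (Fin.cons x z)) := hsymm m _ _

lemma f_le_one_sub_prod {m : ℕ} {f : S → ℝ} (hf01 : ∀ x, 0 ≤ f x ∧ f x ≤ 1)
    (w : Fin (m+1) → S) : f (w 0) ≤ 1 - ∏ i, (1 - f (w i)) := by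
  have h : ∏ i, (1 - f (w i)) ≤ 1 - f (w 0) := by
    rw [Fin.prod_univ_succ]
    calc (1 - f (w 0)) * ∏ i : Fin m, (1 - f (w i.succ))
        ≤ (1 - f (w 0)) * 1 := by
          refine mul_le_mul_of_nonneg_left ?_ (by linarith [(hf01 (w 0)).2])
          exact Finset.prod_le_one
            (fun i _ => by linarith [(hf01 (w i.succ)).2])
            (fun i _ => by linarith [(hf01 (w i.succ)).1])
      _ = 1 - f (w 0) := mul_one _
  linarith

/-- If `S_κ(f)(x) = 0` then the edge kernel at `x` kills `f` a.e. -/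
lemma edge_mul_ae_zero (hmeas : HyperkernelMeasurable κ)
    {f : S → ℝ} (hf : Measurable f) (hf01 : ∀ x, 0 ≤ f x ∧ f x ≤ 1)
    (x : S) (hS : Sop μ κ f x = 0) :
    ∀ᵐ y ∂μ, edgeKernel μ κ x y * ENNReal.ofReal (f y) = 0 := by
  unfold Sop at hS
  have hterm : ∀ m : ℕ, ∫⁻ y : Fin (m+1) → S,
      κ m (Fin.cons x y) * ENNReal.ofReal (1 - ∏ i, (1 - f (y i)))
      ∂(Measure.pi fun _ => μ) = 0 := by
    intro m
    have h0 := ENNReal.tsum_eq_zero.mp hS m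
    rcases mul_eq_zero.mp h0 with h | h
    · exfalso
      have : ((m : ℝ≥0∞) + 2) ≠ 0 := by simp
      exact this h
    · exact h
  have hFmeas : ∀ m : ℕ, Measurable (fun w : Fin (m+1) → S =>
      κ m (Fin.cons x w) * ENNReal.ofReal (f (w 0))) := by
    intro m
    exact ((hmeas m).comp (measurable_cons_const x)).mul
      (ENNReal.measurable_ofReal.comp (hf.comp (measurable_pi_apply 0)))
  have hEmeas : ∀ m : ℕ, Measurable (fun y : S =>
      ∫⁻ z : Fin m → S, κ m (Fin.cons x (Fin.cons y z)) ∂(Measure.pi fun _ => μ)) := by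
    intro m
    have h1 : Measurable (fun q : S × (Fin m → S) => κ m (Fin.cons x (Fin.cons q.1 q.2))) :=
      (hmeas m).comp ((measurable_cons_const x).comp measurable_finCons)
    exact h1.lintegral_prod_right'
  have hymeas : Measurable (fun y => edgeKernel μ κ x y * ENNReal.ofReal (f y)) :=
    (measurable_edgeKernel_right hmeas x).mul (ENNReal.measurable_ofReal.comp hf)
  have key : ∫⁻ y, edgeKernel μ κ x y * ENNReal.ofReal (f y) ∂μ = 0 := by
    have h1 : ∀ y : S, edgeKernel μ κ x y * ENNReal.ofReal (f y)
        = ∑' m : ℕ, ((m : ℝ≥0∞) + 2) * ((m : ℝ≥0∞) + 1) *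
            ((∫⁻ z : Fin m → S, κ m (Fin.cons x (Fin.cons y z))
              ∂(Measure.pi fun _ => μ)) * ENNReal.ofReal (f y)) := by
      intro y
      unfold edgeKernel
      rw [← ENNReal.tsum_mul_right]
      exact tsum_congr fun m => by ring
    have hsummeas : ∀ m : ℕ, Measurable (fun y : S =>
        ((m : ℝ≥0∞) + 2) * ((m : ℝ≥0∞) + 1) *
          ((∫⁻ z : Fin m → S, κ m (Fin.cons x (Fin.cons y z))
            ∂(Measure.pi fun _ => μ)) * ENNReal.ofReal (f y))) := by
      intro m
      exact Measurable.const_mul ((hEmeas m).mul (ENNReal.measurable_ofReal.comp hf)) _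
    rw [lintegral_congr h1, lintegral_tsum (fun m => (hsummeas m).aemeasurable)]
    have hpm : ∀ m : ℕ, Measurable (fun y : S =>
        (∫⁻ z : Fin m → S, κ m (Fin.cons x (Fin.cons y z)) ∂(Measure.pi fun _ => μ))
          * ENNReal.ofReal (f y)) := fun m =>
      (hEmeas m).mul (ENNReal.measurable_ofReal.comp hf)
    refine (ENNReal.tsum_eq_zero).mpr fun m => ?_
    rw [lintegral_const_mul _ (hpm m)]
    have h2 : ∫⁻ y, (∫⁻ z : Fin m → S, κ m (Fin.cons x (Fin.cons y z))
        ∂(Measure.pi fun _ => μ)) * ENNReal.ofReal (f y) ∂μ = 0 := by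
      have h3 : ∀ y : S, (∫⁻ z : Fin m → S, κ m (Fin.cons x (Fin.cons y z))
          ∂(Measure.pi fun _ => μ)) * ENNReal.ofReal (f y)
          = ∫⁻ z : Fin m → S, κ m (Fin.cons x (Fin.cons y z)) * ENNReal.ofReal (f y)
              ∂(Measure.pi fun _ => μ) := by
        intro y
        have hzy : Measurable (fun z : Fin m → S => κ m (Fin.cons x (Fin.cons y z))) :=
          (hmeas m).comp ((measurable_cons_const x).comp (measurable_cons_const y))
        rw [lintegral_mul_const _ hzy]
      rw [lintegral_congr h3]
      have h4 : ∫⁻ y, ∫⁻ z : Fin m → S,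
            κ m (Fin.cons x (Fin.cons y z)) * ENNReal.ofReal (f y)
            ∂(Measure.pi fun _ => μ) ∂μ
          = ∫⁻ w : Fin (m+1) → S, κ m (Fin.cons x w) * ENNReal.ofReal (f (w 0))
              ∂(Measure.pi fun _ => μ) := by
        rw [lintegral_pi_cons μ _ (hFmeas m)]
        refine lintegral_congr fun y => lintegral_congr fun z => ?_
        rw [Fin.cons_zero]
      rw [h4]
      refine le_antisymm ?_ zero_le
      calc ∫⁻ w : Fin (m+1) → S, κ m (Fin.cons x w) * ENNReal.ofReal (f (w 0))
            ∂(Measure.pi fun _ => μ)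
          ≤ ∫⁻ w : Fin (m+1) → S,
              κ m (Fin.cons x w) * ENNReal.ofReal (1 - ∏ i, (1 - f (w i)))
              ∂(Measure.pi fun _ => μ) := by
            refine lintegral_mono fun w => mul_le_mul_right
              (ENNReal.ofReal_le_ofReal (f_le_one_sub_prod hf01 w)) _
        _ = 0 := hterm m
    rw [h2, mul_zero]
  have hres := (lintegral_eq_zero_iff hymeas).mp key
  filter_upwards [hres] with y hy
  exact hy

end Final


/-- Theorem 2.3, `unique`, of the paper.
Let `κ` be an irreducible, integrable hyperkernel and let `f ≤ g` be `[0,1]`-valued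
measurable solutions of `f = 1 - e^{-S_κ(f)}`. Then `f = 0` or `f = g`. -/
theorem stmt1 {S : Type*} [MeasurableSpace S] (μ : Measure S) [IsProbabilityMeasure μ]
    (κ : (m : ℕ) → (Fin (m + 2) → S) → ℝ≥0∞)
    (hmeas : HyperkernelMeasurable κ) (hsymm : HyperkernelSymm κ)
    (hint : HyperkernelIntegrable μ κ)
    (hirr : HyperkernelIrreducible μ κ)
    (f g : S → ℝ) (hf : Measurable f) (hg : Measurable g)
    (hf01 : ∀ x, 0 ≤ f x ∧ f x ≤ 1) (hg01 : ∀ x, 0 ≤ g x ∧ g x ≤ 1)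
    (hfg : ∀ x, f x ≤ g x)
    (hfixf : ∀ x, f x = Phi μ κ f x)
    (hfixg : ∀ x, g x = Phi μ κ g x) :
    (∀ x, f x = 0) ∨ f = g := by
  classical
  have hAmeas : MeasurableSet {x : S | 0 < f x} := measurableSet_lt measurable_const hf
  set A : Set S := {x : S | 0 < f x} with hA
  have hSzero : ∀ x, x ∉ A → Sop μ κ f x = 0 := by
    intro x hx
    have hx' : ¬ (0 < f x) := hx
    have hfx : f x = 0 := le_antisymm (not_lt.mp hx') (hf01 x).1
    refine phi_eq_zero_iff.mp ?_
    rw [← hfixf x, hfx]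
  set E' : Set (S × S) :=
    {p : S × S | p.1 ∈ Aᶜ ∧ p.2 ∈ A ∧ edgeKernel μ κ p.1 p.2 ≠ 0} with hE'
  have hE'meas : MeasurableSet E' := by
    have h1 : E' = (Aᶜ ×ˢ A) ∩ {p : S × S | edgeKernel μ κ p.1 p.2 ≠ 0} := by
      ext p
      simp only [hE', Set.mem_setOf_eq, Set.mem_inter_iff, Set.mem_prod]
      tauto
    rw [h1]
    refine (hAmeas.compl.prod hAmeas).inter ?_
    have h2 : MeasurableSet ((fun p : S × S => edgeKernel μ κ p.1 p.2) ⁻¹' {0}) :=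
      (measurable_edgeKernel hmeas) (measurableSet_singleton 0)
    exact h2.compl
  have hsec : ∀ x : S, μ (Prod.mk x ⁻¹' E') = 0 := by
    intro x
    by_cases hx : x ∈ A
    · have hempty : Prod.mk x ⁻¹' E' = ∅ := by
        ext y
        simp only [Set.mem_preimage, hE', Set.mem_setOf_eq, Set.mem_empty_iff_false,
          iff_false, not_and]
        intro hxc
        exact absurd hx hxc
      rw [hempty]
      exact measure_empty
    · have hae := edge_mul_ae_zero hmeas hf hf01 x (hSzero x hx)
      have hnull := ae_iff.mp hae
      refine measure_mono_null ?_ hnull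
      intro y hy
      simp only [Set.mem_preimage, hE', Set.mem_setOf_eq] at hy
      obtain ⟨-, hyA, hyk⟩ := hy
      simp only [Set.mem_setOf_eq]
      intro h0
      rcases mul_eq_zero.mp h0 with h | h
      · exact hyk h
      · have hypos : 0 < f y := hyA
        rw [ENNReal.ofReal_eq_zero] at h
        linarith
  have hE'null : (μ.prod μ) E' = 0 :=
    (Measure.measure_prod_null hE'meas).mpr (Filter.Eventually.of_forall fun x => hsec x)
  have hEnull : (μ.prod μ)
      {p : S × S | p.1 ∈ A ∧ p.2 ∈ Aᶜ ∧ edgeKernel μ κ p.1 p.2 ≠ 0} = 0 := by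
    have hsub : {p : S × S | p.1 ∈ A ∧ p.2 ∈ Aᶜ ∧ edgeKernel μ κ p.1 p.2 ≠ 0}
        ⊆ Prod.swap ⁻¹' E' := by
      intro p hp
      obtain ⟨h1, h2, h3⟩ := hp
      refine ⟨h2, h1, ?_⟩
      show edgeKernel μ κ p.2 p.1 ≠ 0
      rw [edgeKernel_symm hsymm]
      exact h3
    refine measure_mono_null hsub ?_
    rw [← Measure.map_apply measurable_swap hE'meas, Measure.prod_swap]
    exact hE'null
  have hker : ∀ᵐ p ∂(μ.prod μ), p ∈ A ×ˢ Aᶜ → edgeKernel μ κ p.1 p.2 = 0 := by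
    rw [ae_iff]
    refine measure_mono_null ?_ hEnull
    intro p hp
    rw [Set.mem_setOf_eq, Classical.not_imp] at hp
    obtain ⟨hmem, hne⟩ := hp
    exact ⟨hmem.1, hmem.2, hne⟩
  rcases hirr A hAmeas hker with hA0 | hAc0
  · -- `f` vanishes a.e., hence everywhere
    left
    have haez : f =ᵐ[μ] (fun _ => (0:ℝ)) := by
      rw [Filter.EventuallyEq, ae_iff]
      refine measure_mono_null ?_ hA0
      intro x hx
      simp only [Set.mem_setOf_eq] at hx
      exact lt_of_le_of_ne (hf01 x).1 (Ne.symm hx)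
    intro x
    rw [hfixf x]
    refine phi_eq_zero_iff.mpr ?_
    rw [sop_congr_ae hf measurable_const haez x]
    exact sop_zero_fun x
  · -- `f > 0` a.e., hence `f = g`
    right
    have haefpos : ∀ᵐ x ∂μ, 0 < f x := by
      have hset : {a : S | ¬ 0 < f a} = Aᶜ := by
        ext a; simp [hA]
      rw [ae_iff, hset]
      exact hAc0
    have hSfint : ∫⁻ x, Sop μ κ f x ∂μ ≠ ⊤ :=
      ne_top_of_le_ne_top hint (lintegral_sop_le hmeas hf hf01)
    have hSgint : ∫⁻ x, Sop μ κ g x ∂μ ≠ ⊤ :=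
      ne_top_of_le_ne_top hint (lintegral_sop_le hmeas hg hg01)
    have haeSf : ∀ᵐ x ∂μ, Sop μ κ f x ≠ ⊤ := by
      filter_upwards [ae_lt_top (measurable_sop hmeas hf) hSfint] with x hx
      exact hx.ne
    have haeSg : ∀ᵐ x ∂μ, Sop μ κ g x ≠ ⊤ := by
      filter_upwards [ae_lt_top (measurable_sop hmeas hg) hSgint] with x hx
      exact hx.ne
    have h1meas : Measurable (fun x => ENNReal.ofReal (g x) * Sop μ κ f x) :=
      (ENNReal.measurable_ofReal.comp hg).mul (measurable_sop hmeas hf)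
    have h2meas : Measurable (fun x => ENNReal.ofReal (f x) * Sop μ κ g x) :=
      (ENNReal.measurable_ofReal.comp hf).mul (measurable_sop hmeas hg)
    have h1fin : ∫⁻ x, ENNReal.ofReal (g x) * Sop μ κ f x ∂μ ≠ ⊤ := by
      refine ne_top_of_le_ne_top hSfint (lintegral_mono fun x => ?_)
      calc ENNReal.ofReal (g x) * Sop μ κ f x ≤ 1 * Sop μ κ f x :=
            mul_le_mul_left (ENNReal.ofReal_le_one.mpr (hg01 x).2) _
        _ = Sop μ κ f x := one_mul _
    have hptwise : ∀ᵐ x ∂μ,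
        ENNReal.ofReal (g x) * Sop μ κ f x ≤ ENNReal.ofReal (f x) * Sop μ κ g x
        ∧ (ENNReal.ofReal (f x) * Sop μ κ g x ≤ ENNReal.ofReal (g x) * Sop μ κ f x
            → f x = g x) := by
      filter_upwards [haefpos, haeSf, haeSg] with x hxpos hxf hxg
      have hfp : f x = 1 - Real.exp (-(Sop μ κ f x).toReal) := by
        rw [hfixf x]
        unfold Phi
        rw [expNeg, if_neg hxf]
      have hgp : g x = 1 - Real.exp (-(Sop μ κ g x).toReal) := by
        rw [hfixg x]
        unfold Phi
        rw [expNeg, if_neg hxg]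
      have hg1 : g x < 1 := by
        have := Real.exp_pos (-(Sop μ κ g x).toReal)
        linarith [hgp]
      have hplog : (Sop μ κ f x).toReal = -Real.log (1 - f x) := by
        have h1 : Real.exp (-(Sop μ κ f x).toReal) = 1 - f x := by linarith [hfp]
        have h2 := congrArg Real.log h1
        rw [Real.log_exp] at h2
        linarith
      have hqlog : (Sop μ κ g x).toReal = -Real.log (1 - g x) := by
        have h1 : Real.exp (-(Sop μ κ g x).toReal) = 1 - g x := by linarith [hgp]
        have h2 := congrArg Real.log h1
        rw [Real.log_exp] at h2
        linarith
      have hSf_eq : Sop μ κ f x = ENNReal.ofReal (Sop μ κ f x).toReal :=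
        (ENNReal.ofReal_toReal hxf).symm
      have hSg_eq : Sop μ κ g x = ENNReal.ofReal (Sop μ κ g x).toReal :=
        (ENNReal.ofReal_toReal hxg).symm
      have hp0 : 0 ≤ (Sop μ κ f x).toReal := ENNReal.toReal_nonneg
      have hq0 : 0 ≤ (Sop μ κ g x).toReal := ENNReal.toReal_nonneg
      have hreal_le : g x * (Sop μ κ f x).toReal ≤ f x * (Sop μ κ g x).toReal := by
        rcases eq_or_lt_of_le (hfg x) with heq | hlt
        · exact le_of_eq (by rw [hplog, hqlog, ← heq])
        · exact le_of_lt (by rw [hplog, hqlog]; exact neg_log_ratio hxpos hlt hg1)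
      constructor
      · rw [hSf_eq, hSg_eq, ← ENNReal.ofReal_mul (hg01 x).1,
          ← ENNReal.ofReal_mul (hf01 x).1]
        exact ENNReal.ofReal_le_ofReal hreal_le
      · intro hle2
        rw [hSf_eq, hSg_eq, ← ENNReal.ofReal_mul (hf01 x).1,
          ← ENNReal.ofReal_mul (hg01 x).1] at hle2
        have hr2 : f x * (Sop μ κ g x).toReal ≤ g x * (Sop μ κ f x).toReal :=
          (ENNReal.ofReal_le_ofReal_iff (mul_nonneg (hg01 x).1 hp0)).mp hle2
        by_contra hne
        have hlt : f x < g x := lt_of_le_of_ne (hfg x) hne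
        have hstrict := neg_log_ratio hxpos hlt hg1
        rw [hplog, hqlog] at hr2
        linarith
    have hcross := cross_le (μ := μ) hmeas hsymm hf hg hf01 hg01 hfg
    have hmono : ∫⁻ x, ENNReal.ofReal (g x) * Sop μ κ f x ∂μ
        ≤ ∫⁻ x, ENNReal.ofReal (f x) * Sop μ κ g x ∂μ :=
      lintegral_mono_ae (hptwise.mono fun x hx => hx.1)
    have heq2 : ∫⁻ x, ENNReal.ofReal (f x) * Sop μ κ g x ∂μ
        = ∫⁻ x, ENNReal.ofReal (g x) * Sop μ κ f x ∂μ :=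
      le_antisymm hcross hmono
    have hsub0 : ∫⁻ x, (ENNReal.ofReal (f x) * Sop μ κ g x
        - ENNReal.ofReal (g x) * Sop μ κ f x) ∂μ = 0 := by
      rw [lintegral_sub h1meas h1fin (hptwise.mono fun x hx => hx.1), heq2, tsub_self]
    have haediff := (lintegral_eq_zero_iff (h2meas.sub h1meas)).mp hsub0
    have haefg : ∀ᵐ x ∂μ, f x = g x := by
      filter_upwards [haediff, hptwise] with x hx0 hx
      have hle : ENNReal.ofReal (f x) * Sop μ κ g x
          ≤ ENNReal.ofReal (g x) * Sop μ κ f x :=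
        tsub_eq_zero_iff_le.mp hx0
      exact hx.2 hle
    funext x
    rw [hfixf x, hfixg x]
    unfold Phi
    rw [sop_congr_ae hf hg haefg x]
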